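/- arXiv:2012.01341 — 2 statements merged into one kernel-verified Lean document; each statement's English description precedes it below -/
import Mathlib

section
/- For every natural number n, the function u_n defined by Rodrigues' formula u_n(x) = d^n/dx^n[(x^2 - 1)^n] is a nonzero polynomial function satisfying the Legendre-type eigenvalue equation -((1 - x^2) u_n'(x))' + (1/4) u_n(x) = (n(n+1) + 1/4) u_n(x) for all real x, and it satisfies the Friedrichs boundary conditions lim_{x -> 1^-} (1 - x^2) u_n'(x) = 0 and lim_{x -> -1^+} (1 - x^2) u_n'(x) = 0. -/
open Polynomial

noncomputable def Wpoly (n : ℕ) : ℝ[X] := (X ^ 2 - 1) ^ n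

lemma hdXX : derivative (X ^ 2 - 1 : ℝ[X]) = C 2 * X := by
  simp [derivative_X_pow]
  rw [← C_1, ← C_add, one_add_one_eq_two]

lemma base_lemma (n : ℕ) :
    (X ^ 2 - 1 : ℝ[X]) * derivative (Wpoly n) = C (2 * (n : ℝ)) * (X * Wpoly n) := by
  cases n with
  | zero => simp [Wpoly]
  | succ m =>
    rw [Wpoly, derivative_pow, hdXX, pow_succ]
    push_cast
    simp only [map_mul, map_add, map_sub, map_one, map_ofNat, map_zero, Nat.cast_zero]
    ring

lemma key2 (n : ℕ) : ∀ k : ℕ,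
    (X ^ 2 - 1 : ℝ[X]) * derivative^[k + 2] (Wpoly n) =
      C (2 * ((n : ℝ) - (k + 1))) * (X * derivative^[k + 1] (Wpoly n)) +
        C (((k : ℝ) + 1) * (2 * n - k)) * derivative^[k] (Wpoly n) := by
  intro k
  induction k with
  | zero =>
    have h := congrArg derivative (base_lemma n)
    simp only [derivative_mul, derivative_add, derivative_C, derivative_X, hdXX] at h
    simp only [Function.iterate_succ_apply', Function.iterate_zero_apply]
    push_cast
    push_cast at h
    simp only [map_mul, map_add, map_sub, map_one, map_ofNat, map_zero, Nat.cast_zero]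
    simp only [map_mul, map_add, map_sub, map_one, map_ofNat, map_zero, Nat.cast_zero] at h
    linear_combination h
  | succ k ih =>
    have h := congrArg derivative ih
    simp only [derivative_mul, derivative_add, derivative_C, derivative_X, hdXX] at h
    have e1 : derivative (derivative^[k + 2] (Wpoly n)) = derivative^[k + 3] (Wpoly n) := by
      rw [← Function.iterate_succ_apply' derivative]
    have e2 : derivative (derivative^[k + 1] (Wpoly n)) = derivative^[k + 2] (Wpoly n) := by
      rw [← Function.iterate_succ_apply' derivative]
    have e3 : derivative (derivative^[k] (Wpoly n)) = derivative^[k + 1] (Wpoly n) := by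
      rw [← Function.iterate_succ_apply' derivative]
    rw [e1, e2, e3] at h
    have e4 : k + 1 + 2 = k + 3 := rfl
    have e5 : k + 1 + 1 = k + 2 := rfl
    rw [e4, e5]
    push_cast
    push_cast at h
    simp only [map_mul, map_add, map_sub, map_one, map_ofNat, map_zero, Nat.cast_zero]
    simp only [map_mul, map_add, map_sub, map_one, map_ofNat, map_zero, Nat.cast_zero] at h
    linear_combination h

lemma ode_poly (n : ℕ) :
    derivative ((X ^ 2 - 1 : ℝ[X]) * derivative (derivative^[n] (Wpoly n))) =
      C ((n : ℝ) * ((n : ℝ) + 1)) * derivative^[n] (Wpoly n) := by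
  cases n with
  | zero => simp [Wpoly]
  | succ m =>
    have h := congrArg derivative (key2 (m + 1) m)
    have hz : (2 * (((m + 1 : ℕ) : ℝ) - ((m : ℝ) + 1))) = 0 := by push_cast; ring
    rw [hz, map_zero, zero_mul, zero_add] at h
    simp only [derivative_mul, derivative_C, derivative_X, hdXX] at h
    have e2 : derivative (derivative^[m + 2] (Wpoly (m + 1))) = derivative^[m + 3] (Wpoly (m + 1)) := by
      rw [← Function.iterate_succ_apply' derivative]
    have e3 : derivative (derivative^[m] (Wpoly (m + 1))) = derivative^[m + 1] (Wpoly (m + 1)) := by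
      rw [← Function.iterate_succ_apply' derivative]
    rw [e2, e3] at h
    have e1 : derivative (derivative^[m + 1] (Wpoly (m + 1))) = derivative^[m + 2] (Wpoly (m + 1)) := by
      rw [← Function.iterate_succ_apply' derivative]
    rw [derivative_mul, hdXX, e1, e2]
    push_cast
    push_cast at h
    simp only [map_mul, map_add, map_sub, map_one, map_ofNat, map_zero, Nat.cast_zero]
    simp only [map_mul, map_add, map_sub, map_one, map_ofNat, map_zero, Nat.cast_zero] at h
    linear_combination h

lemma iterDeriv_eval (q : ℝ[X]) (k : ℕ) :
    iteratedDeriv k (fun x : ℝ => q.eval x) = fun x => (derivative^[k] q).eval x := by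
  induction k with
  | zero => simp
  | succ k ih =>
    rw [iteratedDeriv_succ, ih]
    funext x
    rw [Function.iterate_succ_apply']
    exact Polynomial.deriv _

lemma u_eq (n : ℕ) : (fun y : ℝ => (y ^ 2 - 1) ^ n) = fun x => (Wpoly n).eval x := by
  funext x; simp [Wpoly]

/-- **Legendre eigenproblem via Rodrigues' formula.**
For every natural number `n`, the function `u n x = d^n/dx^n [(x^2-1)^n]` is a nonzero
polynomial function satisfying `-((1-x^2) u')' + (1/4) u = (n(n+1)+1/4) u` on `ℝ`, and it
satisfies the Friedrichs boundary conditions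
`lim_{x→1⁻} (1-x^2) u'(x) = 0` and `lim_{x→-1⁺} (1-x^2) u'(x) = 0`. -/
theorem legendre_rodrigues_eigenpair (n : ℕ) :
    (∃ p : Polynomial ℝ, p ≠ 0 ∧
      ∀ x : ℝ, iteratedDeriv n (fun y : ℝ => (y ^ 2 - 1) ^ n) x = p.eval x) ∧
    (∀ x : ℝ,
      -(deriv (fun y : ℝ =>
          (1 - y ^ 2) * deriv (iteratedDeriv n (fun z : ℝ => (z ^ 2 - 1) ^ n)) y) x)
        + (1 / 4) * iteratedDeriv n (fun y : ℝ => (y ^ 2 - 1) ^ n) x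
      = ((n : ℝ) * ((n : ℝ) + 1) + 1 / 4)
          * iteratedDeriv n (fun y : ℝ => (y ^ 2 - 1) ^ n) x) ∧
    Filter.Tendsto
      (fun x : ℝ =>
        (1 - x ^ 2) * deriv (iteratedDeriv n (fun z : ℝ => (z ^ 2 - 1) ^ n)) x)
      (nhdsWithin 1 (Set.Iio 1)) (nhds 0) ∧
    Filter.Tendsto
      (fun x : ℝ =>
        (1 - x ^ 2) * deriv (iteratedDeriv n (fun z : ℝ => (z ^ 2 - 1) ^ n)) x)
      (nhdsWithin (-1) (Set.Ioi (-1))) (nhds 0) := by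
  set p : ℝ[X] := derivative^[n] (Wpoly n) with hp
  have hiter : iteratedDeriv n (fun y : ℝ => (y ^ 2 - 1) ^ n) = fun x => p.eval x := by
    rw [u_eq, iterDeriv_eval]
  have hderiv : deriv (iteratedDeriv n (fun z : ℝ => (z ^ 2 - 1) ^ n))
      = fun x => (derivative p).eval x := by
    rw [hiter]; funext x; exact Polynomial.deriv _
  have hfun : (fun x : ℝ =>
      (1 - x ^ 2) * deriv (iteratedDeriv n (fun z : ℝ => (z ^ 2 - 1) ^ n)) x)
      = fun x => ((1 - X ^ 2 : ℝ[X]) * derivative p).eval x := by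
    funext x; rw [hderiv]; simp
  -- nonvanishing
  have hm : (X ^ 2 - 1 : ℝ[X]).Monic := by
    simpa using monic_X_pow_sub_C (1 : ℝ) (two_ne_zero)
  have hdeg : (Wpoly n).natDegree = n + n := by
    rw [Wpoly, hm.natDegree_pow]
    have : (X ^ 2 - 1 : ℝ[X]) = X ^ 2 - C 1 := by simp
    rw [this, natDegree_X_pow_sub_C]
    ring
  have hc1 : (Wpoly n).coeff (n + n) = 1 := by
    have := (hm.pow n).coeff_natDegree
    rwa [show ((X ^ 2 - 1 : ℝ[X]) ^ n) = Wpoly n from rfl, hdeg] at this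
  have hcoeff : p.coeff n = ((n + n).descFactorial n : ℝ) := by
    rw [hp, coeff_iterate_derivative, hc1]
    simp
  have hpne : p ≠ 0 := by
    intro h
    rw [h, coeff_zero] at hcoeff
    have hpos : (n + n).descFactorial n ≠ 0 := by
      rw [Ne, Nat.descFactorial_eq_zero_iff_lt]; omega
    exact hpos (by exact_mod_cast hcoeff.symm)
  refine ⟨⟨p, hpne, fun x => by rw [hiter]⟩, ?_, ?_, ?_⟩
  · intro x
    have hode := ode_poly n
    rw [← hp] at hode
    have hneg : (1 - X ^ 2 : ℝ[X]) * derivative p = -((X ^ 2 - 1) * derivative p) := by ring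
    have hda : deriv (fun y : ℝ =>
        (1 - y ^ 2) * deriv (iteratedDeriv n (fun z : ℝ => (z ^ 2 - 1) ^ n)) y) x
        = (derivative ((1 - X ^ 2 : ℝ[X]) * derivative p)).eval x := by
      rw [hfun]; exact Polynomial.deriv _
    rw [hda, hiter, hneg, derivative_neg, hode]
    simp only [eval_neg, eval_mul, eval_C]
    ring
  · have hcont : Continuous fun x : ℝ => ((1 - X ^ 2 : ℝ[X]) * derivative p).eval x :=
      Polynomial.continuous _
    rw [hfun]
    have h0 : ((1 - X ^ 2 : ℝ[X]) * derivative p).eval 1 = 0 := by simp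
    have := hcont.tendsto 1
    rw [h0] at this
    exact this.mono_left nhdsWithin_le_nhds
  · have hcont : Continuous fun x : ℝ => ((1 - X ^ 2 : ℝ[X]) * derivative p).eval x :=
      Polynomial.continuous _
    rw [hfun]
    have h0 : ((1 - X ^ 2 : ℝ[X]) * derivative p).eval (-1) = 0 := by simp
    have := hcont.tendsto (-1)
    rw [h0] at this
    exact this.mono_left nhdsWithin_le_nhds
end

section
/- For each n in {0, 1, 2, 3, 4} there exists a function u : (0, infinity) -> R, not identically zero, twice continuously differentiable on (0, infinity), satisfying -u''(x) + ((-242 cosh(x) + 241)/(4 sinh(x)^2)) u(x) = -(5 - n)^2 u(x) for all x > 0, together with the boundary conditions lim_{x -> 0^+}(u(x) + x u'(x)) = 0 and lim_{x -> infinity} u(x) = 0; that is, the discrete eigenvalues of the Dunford-Schwartz eigenproblem are lambda_n = -(5 - n)^2 for n = 0, 1, 2, 3, 4. -/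
open Real Filter Set

/-! Auxiliary functions for the Dunford–Schwartz eigenproblem: the eigenfunctions are
`u x = √(sinh x) * g x` where `g x = P(cosh(x/2)²)/cosh(x/2)^11` for a polynomial `P`. -/

noncomputable def DSg (b0 b1 b2 b3 b4 x : ℝ) : ℝ :=
  (b0 + b1 * Real.cosh (x/2)^2 + b2 * Real.cosh (x/2)^4 + b3 * Real.cosh (x/2)^6 +
    b4 * Real.cosh (x/2)^8) / Real.cosh (x/2)^11

noncomputable def DSg1 (b0 b1 b2 b3 b4 x : ℝ) : ℝ :=
  (-(Real.sinh (x/2)/2) * (11*b0 + 9*b1 * Real.cosh (x/2)^2 + 7*b2 * Real.cosh (x/2)^4 +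
    5*b3 * Real.cosh (x/2)^6 + 3*b4 * Real.cosh (x/2)^8)) / Real.cosh (x/2)^12

noncomputable def DSg2 (b0 b1 b2 b3 b4 x : ℝ) : ℝ :=
  (-(Real.cosh (x/2)^2 * (11*b0 + 9*b1 * Real.cosh (x/2)^2 + 7*b2 * Real.cosh (x/2)^4 +
      5*b3 * Real.cosh (x/2)^6 + 3*b4 * Real.cosh (x/2)^8)
    + Real.sinh (x/2)^2 * (18*b1 * Real.cosh (x/2)^2 + 28*b2 * Real.cosh (x/2)^4 +
      30*b3 * Real.cosh (x/2)^6 + 24*b4 * Real.cosh (x/2)^8)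
    - 12 * Real.sinh (x/2)^2 * (11*b0 + 9*b1 * Real.cosh (x/2)^2 + 7*b2 * Real.cosh (x/2)^4 +
      5*b3 * Real.cosh (x/2)^6 + 3*b4 * Real.cosh (x/2)^8))) / (4 * Real.cosh (x/2)^13)

lemma coshHalf_hasDeriv (x : ℝ) :
    HasDerivAt (fun y : ℝ => Real.cosh (y/2)) (Real.sinh (x/2) * (1/2)) x := by
  simpa [Function.comp_def] using (Real.hasDerivAt_cosh (x/2)).comp x ((hasDerivAt_id x).div_const 2)

lemma sinhHalf_hasDeriv (x : ℝ) :
    HasDerivAt (fun y : ℝ => Real.sinh (y/2)) (Real.cosh (x/2) * (1/2)) x := by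
  simpa [Function.comp_def] using (Real.hasDerivAt_sinh (x/2)).comp x ((hasDerivAt_id x).div_const 2)

lemma DSg_hasDeriv (b0 b1 b2 b3 b4 x : ℝ) :
    HasDerivAt (fun y => DSg b0 b1 b2 b3 b4 y) (DSg1 b0 b1 b2 b3 b4 x) x := by
  have hc := coshHalf_hasDeriv x
  have hcp : (0:ℝ) < Real.cosh (x/2) := Real.cosh_pos _
  have hN := ((((hasDerivAt_const x b0).add ((hc.pow 2).const_mul b1)).add
      ((hc.pow 4).const_mul b2)).add ((hc.pow 6).const_mul b3)).add ((hc.pow 8).const_mul b4)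
  have hg := hN.div (hc.pow 11) (pow_ne_zero 11 hcp.ne')
  unfold DSg DSg1
  refine hg.congr_deriv ?_
  simp only [Pi.pow_apply, Pi.add_apply, Pi.mul_apply]
  field_simp
  ring

lemma DSg1_hasDeriv (b0 b1 b2 b3 b4 x : ℝ) :
    HasDerivAt (fun y => DSg1 b0 b1 b2 b3 b4 y) (DSg2 b0 b1 b2 b3 b4 x) x := by
  have hc := coshHalf_hasDeriv x
  have hs := sinhHalf_hasDeriv x
  have hcp : (0:ℝ) < Real.cosh (x/2) := Real.cosh_pos _
  have hA : HasDerivAt (fun y : ℝ => -(Real.sinh (y/2)/2))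
      (-(Real.cosh (x/2) * (1/2)/2)) x := (hs.div_const 2).neg
  have hM := ((((hasDerivAt_const x (11*b0)).add ((hc.pow 2).const_mul (9*b1))).add
      ((hc.pow 4).const_mul (7*b2))).add ((hc.pow 6).const_mul (5*b3))).add
      ((hc.pow 8).const_mul (3*b4))
  have hg := (hA.mul hM).div (hc.pow 12) (pow_ne_zero 12 hcp.ne')
  unfold DSg1 DSg2
  refine hg.congr_deriv ?_
  simp only [Pi.pow_apply, Pi.add_apply, Pi.mul_apply]
  field_simp
  ring

lemma DSg_contDiff (b0 b1 b2 b3 b4 : ℝ) : ContDiff ℝ 2 (fun y => DSg b0 b1 b2 b3 b4 y) := by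
  unfold DSg
  have hc : ContDiff ℝ 2 (fun y : ℝ => Real.cosh (y/2)) :=
    Real.contDiff_cosh.comp (contDiff_id.div_const 2)
  exact ((((contDiff_const.add (contDiff_const.mul (hc.pow 2))).add
      (contDiff_const.mul (hc.pow 4))).add (contDiff_const.mul (hc.pow 6))).add
      (contDiff_const.mul (hc.pow 8))).div (hc.pow 11)
      (fun x => pow_ne_zero 11 (Real.cosh_pos _).ne')

lemma DSg1_continuous (b0 b1 b2 b3 b4 : ℝ) : Continuous (fun y => DSg1 b0 b1 b2 b3 b4 y) := by
  unfold DSg1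
  apply Continuous.div
  · fun_prop
  · fun_prop
  · exact fun x => pow_ne_zero 12 (Real.cosh_pos _).ne'

/-- The generic construction: given coefficients such that the (cleared-denominator) ODE
holds and the polynomial part is somewhere nonzero, all five requirements hold. -/
theorem DS_main (b0 b1 b2 b3 b4 lam : ℝ)
    (hO : ∀ x : ℝ, 0 < x →
      4 * Real.sinh x ^ 2 * DSg2 b0 b1 b2 b3 b4 x
        + 4 * Real.sinh x * Real.cosh x * DSg1 b0 b1 b2 b3 b4 x
        + (2 * Real.sinh x ^ 2 - (Real.cosh x - 1) * (Real.cosh x - 241)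
            + 4 * lam * Real.sinh x ^ 2) * DSg b0 b1 b2 b3 b4 x = 0)
    (hnz : ∃ x : ℝ, 0 < x ∧ DSg b0 b1 b2 b3 b4 x ≠ 0) :
    ∃ u : ℝ → ℝ,
      (∃ x : ℝ, 0 < x ∧ u x ≠ 0) ∧
      ContDiffOn ℝ 2 u (Set.Ioi 0) ∧
      (∀ x : ℝ, 0 < x →
        -(deriv (deriv u) x)
          + ((-242 * Real.cosh x + 241) / (4 * Real.sinh x ^ 2)) * u x
        = lam * u x) ∧
      Filter.Tendsto (fun x : ℝ => u x + x * deriv u x)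
        (nhdsWithin 0 (Set.Ioi 0)) (nhds 0) ∧
      Filter.Tendsto u Filter.atTop (nhds 0) := by
  have hrd : ∀ y : ℝ, 0 < y → HasDerivAt (fun z => Real.sqrt (Real.sinh z))
      (1 / (2 * Real.sqrt (Real.sinh y)) * Real.cosh y) y := by
    intro y hy
    have hsp : (0:ℝ) < Real.sinh y := Real.sinh_pos_iff.mpr hy
    simpa [Function.comp_def] using (Real.hasDerivAt_sqrt hsp.ne').comp y (Real.hasDerivAt_sinh y)
  have hud : ∀ y : ℝ, 0 < y →
      HasDerivAt (fun z => Real.sqrt (Real.sinh z) * DSg b0 b1 b2 b3 b4 z)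
        (1 / (2 * Real.sqrt (Real.sinh y)) * Real.cosh y * DSg b0 b1 b2 b3 b4 y
          + Real.sqrt (Real.sinh y) * DSg1 b0 b1 b2 b3 b4 y) y := by
    intro y hy
    exact (hrd y hy).mul (DSg_hasDeriv b0 b1 b2 b3 b4 y)
  have hU1d : ∀ y : ℝ, 0 < y →
      HasDerivAt (fun z => 1 / (2 * Real.sqrt (Real.sinh z)) * Real.cosh z * DSg b0 b1 b2 b3 b4 z
          + Real.sqrt (Real.sinh z) * DSg1 b0 b1 b2 b3 b4 z)
        (-(Real.cosh y^2 * DSg b0 b1 b2 b3 b4 y) / (4 * Real.sqrt (Real.sinh y)^3)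
          + Real.sinh y * DSg b0 b1 b2 b3 b4 y / (2 * Real.sqrt (Real.sinh y))
          + Real.cosh y * DSg1 b0 b1 b2 b3 b4 y / Real.sqrt (Real.sinh y)
          + Real.sqrt (Real.sinh y) * DSg2 b0 b1 b2 b3 b4 y) y := by
    intro y hy
    have hsp : (0:ℝ) < Real.sinh y := Real.sinh_pos_iff.mpr hy
    have hrp : (0:ℝ) < Real.sqrt (Real.sinh y) := Real.sqrt_pos.mpr hsp
    have h2r : (2 * Real.sqrt (Real.sinh y)) ≠ 0 := by positivity
    have hi : HasDerivAt (fun z => 1 / (2 * Real.sqrt (Real.sinh z)))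
        (-(2 * (1 / (2 * Real.sqrt (Real.sinh y)) * Real.cosh y))
          / (2 * Real.sqrt (Real.sinh y))^2) y := by
      simpa [one_div, Pi.inv_def] using ((hrd y hy).const_mul 2).inv h2r
    have h1 := (hi.mul (Real.hasDerivAt_cosh y)).mul (DSg_hasDeriv b0 b1 b2 b3 b4 y)
    have h2 := (hrd y hy).mul (DSg1_hasDeriv b0 b1 b2 b3 b4 y)
    have h := h1.add h2
    refine h.congr_deriv ?_
    simp only [Pi.mul_apply]
    field_simp
    ring
  refine ⟨fun y => Real.sqrt (Real.sinh y) * DSg b0 b1 b2 b3 b4 y, ?_, ?_, ?_, ?_, ?_⟩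
  · obtain ⟨x, hx, hne⟩ := hnz
    exact ⟨x, hx, mul_ne_zero
      (Real.sqrt_pos.mpr (Real.sinh_pos_iff.mpr hx)).ne' hne⟩
  · intro x hx
    have hsp : (0:ℝ) < Real.sinh x := Real.sinh_pos_iff.mpr (by exact hx)
    have h1 : ContDiffAt ℝ 2 (fun y => Real.sqrt (Real.sinh y)) x :=
      (Real.contDiffAt_sqrt hsp.ne').comp x Real.contDiff_sinh.contDiffAt
    exact (h1.mul (DSg_contDiff b0 b1 b2 b3 b4).contDiffAt).contDiffWithinAt
  · intro x hx
    have hsp : (0:ℝ) < Real.sinh x := Real.sinh_pos_iff.mpr hx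
    have hrp : (0:ℝ) < Real.sqrt (Real.sinh x) := Real.sqrt_pos.mpr hsp
    have hev : deriv (fun z => Real.sqrt (Real.sinh z) * DSg b0 b1 b2 b3 b4 z)
        =ᶠ[nhds x] (fun y => 1 / (2 * Real.sqrt (Real.sinh y)) * Real.cosh y
            * DSg b0 b1 b2 b3 b4 y + Real.sqrt (Real.sinh y) * DSg1 b0 b1 b2 b3 b4 y) := by
      filter_upwards [isOpen_Ioi.mem_nhds hx] with y hy
      exact (hud y hy).deriv
    have e2 : deriv (deriv (fun z => Real.sqrt (Real.sinh z) * DSg b0 b1 b2 b3 b4 z)) x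
        = -(Real.cosh x^2 * DSg b0 b1 b2 b3 b4 x) / (4 * Real.sqrt (Real.sinh x)^3)
          + Real.sinh x * DSg b0 b1 b2 b3 b4 x / (2 * Real.sqrt (Real.sinh x))
          + Real.cosh x * DSg1 b0 b1 b2 b3 b4 x / Real.sqrt (Real.sinh x)
          + Real.sqrt (Real.sinh x) * DSg2 b0 b1 b2 b3 b4 x := by
      rw [hev.deriv_eq]
      exact (hU1d x hx).deriv
    rw [e2]
    have key := hO x hx
    rw [← sub_eq_zero]
    set r := Real.sqrt (Real.sinh x) with hrdef
    have hsr : Real.sinh x = r^2 := (Real.sq_sqrt hsp.le).symm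
    rw [hsr] at key ⊢
    have hr0 : r ≠ 0 := hrp.ne'
    field_simp
    linear_combination (-2 * r) * key
  · -- boundary condition at 0⁺
    have hGc : Continuous (fun y => DSg b0 b1 b2 b3 b4 y) := (DSg_contDiff b0 b1 b2 b3 b4).continuous
    have hrc : Continuous (fun y : ℝ => Real.sqrt (Real.sinh y)) :=
      Real.continuous_sqrt.comp Real.continuous_sinh
    apply Tendsto.congr' (f₁ := fun y =>
        Real.sqrt (Real.sinh y) * DSg b0 b1 b2 b3 b4 y
          + (y * (1 / (2 * Real.sqrt (Real.sinh y)) * Real.cosh y * DSg b0 b1 b2 b3 b4 y)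
            + y * (Real.sqrt (Real.sinh y) * DSg1 b0 b1 b2 b3 b4 y)))
    · filter_upwards [self_mem_nhdsWithin] with y hy
      rw [(hud y hy).deriv]
      ring
    · have T1 : Tendsto (fun y => Real.sqrt (Real.sinh y) * DSg b0 b1 b2 b3 b4 y)
          (nhdsWithin 0 (Set.Ioi 0)) (nhds 0) := by
        have h := ((hrc.mul hGc).tendsto 0).mono_left
          (nhdsWithin_le_nhds (s := Set.Ioi (0:ℝ)))
        simpa [Pi.mul_def] using h
      have T3 : Tendsto (fun y : ℝ => y * (Real.sqrt (Real.sinh y) * DSg1 b0 b1 b2 b3 b4 y))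
          (nhdsWithin 0 (Set.Ioi 0)) (nhds 0) := by
        have h := ((continuous_id.mul (hrc.mul (DSg1_continuous b0 b1 b2 b3 b4))).tendsto 0).mono_left
          (nhdsWithin_le_nhds (s := Set.Ioi (0:ℝ)))
        simpa [Pi.mul_def] using h
      have T2 : Tendsto (fun y : ℝ =>
          y * (1 / (2 * Real.sqrt (Real.sinh y)) * Real.cosh y * DSg b0 b1 b2 b3 b4 y))
          (nhdsWithin 0 (Set.Ioi 0)) (nhds 0) := by
        have h0 : Tendsto (fun y : ℝ => y * (2 * Real.sqrt (Real.sinh y))⁻¹)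
            (nhdsWithin 0 (Set.Ioi 0)) (nhds 0) := by
          apply squeeze_zero' (g := fun y : ℝ => Real.sqrt y)
          · filter_upwards [self_mem_nhdsWithin] with y hy
            have : (0:ℝ) < y := hy
            positivity
          · filter_upwards [self_mem_nhdsWithin] with y hy
            have hy' : (0:ℝ) < y := hy
            have hsy : (0:ℝ) < Real.sqrt y := Real.sqrt_pos.mpr hy'
            have hle : Real.sqrt y ≤ Real.sqrt (Real.sinh y) :=
              Real.sqrt_le_sqrt (Real.self_le_sinh_iff.mpr hy'.le)
            have hrp : (0:ℝ) < Real.sqrt (Real.sinh y) := lt_of_lt_of_le hsy hle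
            have hA : (2 * Real.sqrt (Real.sinh y))⁻¹ ≤ (2 * Real.sqrt y)⁻¹ := by
              apply inv_anti₀ (by positivity)
              linarith
            have hB : Real.sqrt y * Real.sqrt y = y := Real.mul_self_sqrt hy'.le
            have hC : (2 * Real.sqrt y) * (2 * Real.sqrt y)⁻¹ = 1 :=
              mul_inv_cancel₀ (by positivity)
            nlinarith [mul_le_mul_of_nonneg_left hA hy'.le]
          · have h := (Real.continuous_sqrt.tendsto 0).mono_left
              (nhdsWithin_le_nhds (s := Set.Ioi (0:ℝ)))
            simpa using h
        have h5 : Tendsto (fun y : ℝ => Real.cosh y * DSg b0 b1 b2 b3 b4 y)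
            (nhdsWithin 0 (Set.Ioi 0))
            (nhds (Real.cosh 0 * DSg b0 b1 b2 b3 b4 0)) :=
          ((Real.continuous_cosh.mul hGc).tendsto 0).mono_left nhdsWithin_le_nhds
        have h := h0.mul h5
        rw [zero_mul] at h
        apply h.congr
        intro y
        rw [one_div]
        ring
      have := T1.add (T2.add T3)
      simpa using this
  · -- decay at infinity
    set K := |b0| + |b1| + |b2| + |b3| + |b4| with hK
    apply squeeze_zero_norm (a := fun y : ℝ => 4 * Real.sqrt 2 * K * Real.exp (-y))
    · intro y
      have hcp : (0:ℝ) < Real.cosh (y/2) := Real.cosh_pos _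
      have hc1 : (1:ℝ) ≤ Real.cosh (y/2) := Real.one_le_cosh _
      set c := Real.cosh (y/2) with hc
      -- |N| ≤ K c^8
      have p2 : c^2 ≤ c^8 := pow_le_pow_right₀ hc1 (by norm_num)
      have p4 : c^4 ≤ c^8 := pow_le_pow_right₀ hc1 (by norm_num)
      have p6 : c^6 ≤ c^8 := pow_le_pow_right₀ hc1 (by norm_num)
      have p0 : (1:ℝ) ≤ c^8 := by
        have := pow_le_pow_right₀ hc1 (by norm_num : (0:ℕ) ≤ 8)
        simpa using this
      have hNabs : |b0 + b1 * c^2 + b2 * c^4 + b3 * c^6 + b4 * c^8| ≤ K * c^8 := by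
        have t1 : |b0 + b1 * c^2 + b2 * c^4 + b3 * c^6 + b4 * c^8|
            ≤ |b0| + |b1| * c^2 + |b2| * c^4 + |b3| * c^6 + |b4| * c^8 := by
          calc |b0 + b1 * c^2 + b2 * c^4 + b3 * c^6 + b4 * c^8|
              ≤ |b0 + b1 * c^2 + b2 * c^4 + b3 * c^6| + |b4 * c^8| := abs_add_le _ _
            _ ≤ |b0 + b1 * c^2 + b2 * c^4| + |b3 * c^6| + |b4 * c^8| := by
                have := abs_add_le (b0 + b1 * c^2 + b2 * c^4) (b3 * c^6); linarith
            _ ≤ |b0 + b1 * c^2| + |b2 * c^4| + |b3 * c^6| + |b4 * c^8| := by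
                have := abs_add_le (b0 + b1 * c^2) (b2 * c^4); linarith
            _ ≤ |b0| + |b1 * c^2| + |b2 * c^4| + |b3 * c^6| + |b4 * c^8| := by
                have := abs_add_le b0 (b1 * c^2); linarith
            _ = |b0| + |b1| * c^2 + |b2| * c^4 + |b3| * c^6 + |b4| * c^8 := by
                rw [abs_mul, abs_mul, abs_mul, abs_mul, abs_pow, abs_pow, abs_pow, abs_pow,
                  abs_of_pos hcp]
        have m0 := mul_le_mul_of_nonneg_left p0 (abs_nonneg b0)
        have m2 := mul_le_mul_of_nonneg_left p2 (abs_nonneg b1)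
        have m4 := mul_le_mul_of_nonneg_left p4 (abs_nonneg b2)
        have m6 := mul_le_mul_of_nonneg_left p6 (abs_nonneg b3)
        rw [hK]
        nlinarith [t1]
      -- |G| * c^3 ≤ K
      have hG3 : |DSg b0 b1 b2 b3 b4 y| * c^3 ≤ K := by
        have hGe : |DSg b0 b1 b2 b3 b4 y|
            = |b0 + b1 * c^2 + b2 * c^4 + b3 * c^6 + b4 * c^8| / c^11 := by
          unfold DSg
          rw [abs_div, abs_of_pos (pow_pos hcp 11)]
        rw [hGe, div_mul_eq_mul_div, div_le_iff₀ (pow_pos hcp 11)]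
        nlinarith [mul_le_mul_of_nonneg_right hNabs (pow_nonneg hcp.le 3),
          pow_pos hcp 3]
      -- sqrt (sinh y) ≤ √2 * c
      have hsinh2 : Real.sinh y ≤ 2 * c^2 := by
        have h := Real.sinh_two_mul (y/2)
        have h2 : Real.sinh y = 2 * Real.sinh (y/2) * Real.cosh (y/2) := by
          rw [← h]; congr 1; ring
        have hsc : Real.sinh (y/2) < Real.cosh (y/2) := Real.sinh_lt_cosh _
        rw [h2]
        nlinarith
      have hrb : Real.sqrt (Real.sinh y) ≤ Real.sqrt 2 * c := by
        have h1 : Real.sqrt (Real.sinh y) ≤ Real.sqrt (2 * c^2) := Real.sqrt_le_sqrt hsinh2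
        have h2 : Real.sqrt (2 * c^2) = Real.sqrt 2 * c := by
          rw [Real.sqrt_mul (by norm_num : (0:ℝ) ≤ 2), Real.sqrt_sq hcp.le]
        rw [h2] at h1; exact h1
      -- 1 ≤ 4 c² exp(-y)
      have hc2q : (1:ℝ) ≤ 4 * c^2 * Real.exp (-y) := by
        have hE : Real.exp (y/2) ≤ 2 * c := by
          rw [hc, Real.cosh_eq]
          have := Real.exp_pos (-(y/2))
          linarith
        have hE2 : Real.exp (y/2)^2 = Real.exp y := by
          rw [sq, ← Real.exp_add]; ring_nf
        have hq : Real.exp (-y) * Real.exp y = 1 := by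
          rw [← Real.exp_add]; simp
        have hEp : (0:ℝ) < Real.exp (y/2) := Real.exp_pos _
        have hqp : (0:ℝ) < Real.exp (-y) := Real.exp_pos _
        have hqE : Real.exp (-y) * Real.exp (y/2)^2 = 1 := by rw [hE2]; exact hq
        have h2cE : 0 ≤ 2 * c - Real.exp (y/2) := sub_nonneg.mpr hE
        have hprod : 0 ≤ Real.exp (-y) * ((2*c - Real.exp (y/2)) * (2*c + Real.exp (y/2))) :=
          mul_nonneg hqp.le (mul_nonneg h2cE (by positivity))
        nlinarith [hqE, hprod]
      have hrnn : (0:ℝ) ≤ Real.sqrt (Real.sinh y) := Real.sqrt_nonneg _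
      have hq : (0:ℝ) ≤ Real.exp (-y) := (Real.exp_pos _).le
      calc ‖Real.sqrt (Real.sinh y) * DSg b0 b1 b2 b3 b4 y‖
          = Real.sqrt (Real.sinh y) * |DSg b0 b1 b2 b3 b4 y| := by
            rw [Real.norm_eq_abs, abs_mul, abs_of_nonneg hrnn]
        _ ≤ (Real.sqrt 2 * c) * |DSg b0 b1 b2 b3 b4 y| :=
            mul_le_mul_of_nonneg_right hrb (abs_nonneg _)
        _ ≤ (Real.sqrt 2 * c) * |DSg b0 b1 b2 b3 b4 y| * (4 * c^2 * Real.exp (-y)) := by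
            apply le_mul_of_one_le_right _ hc2q
            positivity
        _ = (4 * Real.sqrt 2 * Real.exp (-y)) * (|DSg b0 b1 b2 b3 b4 y| * c^3) := by ring
        _ ≤ (4 * Real.sqrt 2 * Real.exp (-y)) * K := by
            apply mul_le_mul_of_nonneg_left hG3
            positivity
        _ = 4 * Real.sqrt 2 * K * Real.exp (-y) := by ring
    · have h := Real.tendsto_exp_neg_atTop_nhds_zero.const_mul (4 * Real.sqrt 2 * K)
      simpa using h

set_option maxHeartbeats 4000000 in
/-- **Discrete eigenvalues of the Dunford-Schwartz eigenproblem.**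
For each `n ∈ {0, 1, 2, 3, 4}` there exists a function `u`, not identically zero on
`(0, ∞)`, twice continuously differentiable on `(0, ∞)`, satisfying
`-u'' + ((-242 cosh x + 241)/(4 sinh(x)²)) u = -(5 - n)² u` on `(0, ∞)`, together with
the boundary conditions `lim_{x→0⁺} (u(x) + x u'(x)) = 0` and `lim_{x→∞} u(x) = 0`;
that is, the discrete eigenvalues are `λ_n = -(5 - n)²` for `n = 0, 1, 2, 3, 4`. -/
theorem dunford_schwartz_discrete_eigenvalues (n : ℕ) (hn : n ≤ 4) :
    ∃ u : ℝ → ℝ,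
      (∃ x : ℝ, 0 < x ∧ u x ≠ 0) ∧
      ContDiffOn ℝ 2 u (Set.Ioi 0) ∧
      (∀ x : ℝ, 0 < x →
        -(deriv (deriv u) x)
          + ((-242 * Real.cosh x + 241) / (4 * Real.sinh x ^ 2)) * u x
        = -((5 - (n : ℝ)) ^ 2) * u x) ∧
      Filter.Tendsto (fun x : ℝ => u x + x * deriv u x)
        (nhdsWithin 0 (Set.Ioi 0)) (nhds 0) ∧
      Filter.Tendsto u Filter.atTop (nhds 0) := by
  interval_cases n
  · refine DS_main 1 0 0 0 0 _ ?_ ?_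
    · intro x hx
      have hc : Real.cosh (x/2) = (Real.exp (x/2) + (Real.exp (x/2))⁻¹)/2 := by
        rw [Real.cosh_eq, Real.exp_neg]
      have hs : Real.sinh (x/2) = (Real.exp (x/2) - (Real.exp (x/2))⁻¹)/2 := by
        rw [Real.sinh_eq, Real.exp_neg]
      have he2 : Real.exp x = Real.exp (x/2)^2 := by
        rw [sq, ← Real.exp_add]; ring_nf
      have hcx : Real.cosh x = (Real.exp (x/2)^2 + (Real.exp (x/2)^2)⁻¹)/2 := by
        rw [Real.cosh_eq, Real.exp_neg, he2]
      have hsx : Real.sinh x = (Real.exp (x/2)^2 - (Real.exp (x/2)^2)⁻¹)/2 := by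
        rw [Real.sinh_eq, Real.exp_neg, he2]
      have h1 : Real.exp (x/2) ≠ 0 := (Real.exp_pos _).ne'
      unfold DSg DSg1 DSg2
      rw [hc, hs, hcx, hsx]
      push_cast
      field_simp
      ring
    · refine ⟨6, by norm_num, ?_⟩
      have hexp3 : (20:ℝ) ≤ Real.exp 3 := by
        have h3 : Real.exp 3 = Real.exp 1 ^ 3 := by
          rw [show (3:ℝ) = ((3:ℕ):ℝ) * 1 by norm_num, Real.exp_nat_mul]
        have hgt : (2.718:ℝ) ≤ Real.exp 1 := by linarith [Real.exp_one_gt_d9]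
        have hp : (2.718:ℝ)^3 ≤ Real.exp 1^3 := by
          apply pow_le_pow_left₀ (by norm_num) hgt
        have h20 : (20:ℝ) ≤ (2.718:ℝ)^3 := by norm_num
        rw [h3]; linarith
      have hc10 : (10:ℝ) ≤ Real.cosh 3 := by
        rw [Real.cosh_eq]
        have := Real.exp_pos (-3:ℝ)
        linarith
      have hcp : (0:ℝ) < Real.cosh 3 := by linarith
      unfold DSg
      rw [show (6:ℝ)/2 = 3 by norm_num]
      apply div_ne_zero _ (pow_ne_zero 11 hcp.ne')
      apply ne_of_gt
      have hc2 : (100:ℝ) ≤ Real.cosh 3^2 := by nlinarith [hc10]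
      have h42 : 100 * Real.cosh 3^2 ≤ Real.cosh 3^4 := by
        nlinarith [mul_nonneg (sub_nonneg.mpr hc2) (sq_nonneg (Real.cosh 3))]
      have h64 : 100 * Real.cosh 3^4 ≤ Real.cosh 3^6 := by
        nlinarith [mul_nonneg (sub_nonneg.mpr hc2) (pow_nonneg hcp.le 4)]
      have h86 : 100 * Real.cosh 3^6 ≤ Real.cosh 3^8 := by
        nlinarith [mul_nonneg (sub_nonneg.mpr hc2) (pow_nonneg hcp.le 6)]
      have hp4 : (0:ℝ) ≤ Real.cosh 3^4 := pow_nonneg hcp.le 4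
      have hp6 : (0:ℝ) ≤ Real.cosh 3^6 := pow_nonneg hcp.le 6
      linarith
  · refine DS_main 10 (-9) 0 0 0 _ ?_ ?_
    · intro x hx
      have hc : Real.cosh (x/2) = (Real.exp (x/2) + (Real.exp (x/2))⁻¹)/2 := by
        rw [Real.cosh_eq, Real.exp_neg]
      have hs : Real.sinh (x/2) = (Real.exp (x/2) - (Real.exp (x/2))⁻¹)/2 := by
        rw [Real.sinh_eq, Real.exp_neg]
      have he2 : Real.exp x = Real.exp (x/2)^2 := by
        rw [sq, ← Real.exp_add]; ring_nf
      have hcx : Real.cosh x = (Real.exp (x/2)^2 + (Real.exp (x/2)^2)⁻¹)/2 := by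
        rw [Real.cosh_eq, Real.exp_neg, he2]
      have hsx : Real.sinh x = (Real.exp (x/2)^2 - (Real.exp (x/2)^2)⁻¹)/2 := by
        rw [Real.sinh_eq, Real.exp_neg, he2]
      have h1 : Real.exp (x/2) ≠ 0 := (Real.exp_pos _).ne'
      unfold DSg DSg1 DSg2
      rw [hc, hs, hcx, hsx]
      push_cast
      field_simp
      ring
    · refine ⟨6, by norm_num, ?_⟩
      have hexp3 : (20:ℝ) ≤ Real.exp 3 := by
        have h3 : Real.exp 3 = Real.exp 1 ^ 3 := by
          rw [show (3:ℝ) = ((3:ℕ):ℝ) * 1 by norm_num, Real.exp_nat_mul]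
        have hgt : (2.718:ℝ) ≤ Real.exp 1 := by linarith [Real.exp_one_gt_d9]
        have hp : (2.718:ℝ)^3 ≤ Real.exp 1^3 := by
          apply pow_le_pow_left₀ (by norm_num) hgt
        have h20 : (20:ℝ) ≤ (2.718:ℝ)^3 := by norm_num
        rw [h3]; linarith
      have hc10 : (10:ℝ) ≤ Real.cosh 3 := by
        rw [Real.cosh_eq]
        have := Real.exp_pos (-3:ℝ)
        linarith
      have hcp : (0:ℝ) < Real.cosh 3 := by linarith
      unfold DSg
      rw [show (6:ℝ)/2 = 3 by norm_num]
      apply div_ne_zero _ (pow_ne_zero 11 hcp.ne')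
      apply ne_of_lt
      have hc2 : (100:ℝ) ≤ Real.cosh 3^2 := by nlinarith [hc10]
      have h42 : 100 * Real.cosh 3^2 ≤ Real.cosh 3^4 := by
        nlinarith [mul_nonneg (sub_nonneg.mpr hc2) (sq_nonneg (Real.cosh 3))]
      have h64 : 100 * Real.cosh 3^4 ≤ Real.cosh 3^6 := by
        nlinarith [mul_nonneg (sub_nonneg.mpr hc2) (pow_nonneg hcp.le 4)]
      have h86 : 100 * Real.cosh 3^6 ≤ Real.cosh 3^8 := by
        nlinarith [mul_nonneg (sub_nonneg.mpr hc2) (pow_nonneg hcp.le 6)]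
      have hp4 : (0:ℝ) ≤ Real.cosh 3^4 := pow_nonneg hcp.le 4
      have hp6 : (0:ℝ) ≤ Real.cosh 3^6 := pow_nonneg hcp.le 6
      linarith
  · refine DS_main 45 (-72) 28 0 0 _ ?_ ?_
    · intro x hx
      have hc : Real.cosh (x/2) = (Real.exp (x/2) + (Real.exp (x/2))⁻¹)/2 := by
        rw [Real.cosh_eq, Real.exp_neg]
      have hs : Real.sinh (x/2) = (Real.exp (x/2) - (Real.exp (x/2))⁻¹)/2 := by
        rw [Real.sinh_eq, Real.exp_neg]
      have he2 : Real.exp x = Real.exp (x/2)^2 := by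
        rw [sq, ← Real.exp_add]; ring_nf
      have hcx : Real.cosh x = (Real.exp (x/2)^2 + (Real.exp (x/2)^2)⁻¹)/2 := by
        rw [Real.cosh_eq, Real.exp_neg, he2]
      have hsx : Real.sinh x = (Real.exp (x/2)^2 - (Real.exp (x/2)^2)⁻¹)/2 := by
        rw [Real.sinh_eq, Real.exp_neg, he2]
      have h1 : Real.exp (x/2) ≠ 0 := (Real.exp_pos _).ne'
      unfold DSg DSg1 DSg2
      rw [hc, hs, hcx, hsx]
      push_cast
      field_simp
      ring
    · refine ⟨6, by norm_num, ?_⟩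
      have hexp3 : (20:ℝ) ≤ Real.exp 3 := by
        have h3 : Real.exp 3 = Real.exp 1 ^ 3 := by
          rw [show (3:ℝ) = ((3:ℕ):ℝ) * 1 by norm_num, Real.exp_nat_mul]
        have hgt : (2.718:ℝ) ≤ Real.exp 1 := by linarith [Real.exp_one_gt_d9]
        have hp : (2.718:ℝ)^3 ≤ Real.exp 1^3 := by
          apply pow_le_pow_left₀ (by norm_num) hgt
        have h20 : (20:ℝ) ≤ (2.718:ℝ)^3 := by norm_num
        rw [h3]; linarith
      have hc10 : (10:ℝ) ≤ Real.cosh 3 := by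
        rw [Real.cosh_eq]
        have := Real.exp_pos (-3:ℝ)
        linarith
      have hcp : (0:ℝ) < Real.cosh 3 := by linarith
      unfold DSg
      rw [show (6:ℝ)/2 = 3 by norm_num]
      apply div_ne_zero _ (pow_ne_zero 11 hcp.ne')
      apply ne_of_gt
      have hc2 : (100:ℝ) ≤ Real.cosh 3^2 := by nlinarith [hc10]
      have h42 : 100 * Real.cosh 3^2 ≤ Real.cosh 3^4 := by
        nlinarith [mul_nonneg (sub_nonneg.mpr hc2) (sq_nonneg (Real.cosh 3))]
      have h64 : 100 * Real.cosh 3^4 ≤ Real.cosh 3^6 := by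
        nlinarith [mul_nonneg (sub_nonneg.mpr hc2) (pow_nonneg hcp.le 4)]
      have h86 : 100 * Real.cosh 3^6 ≤ Real.cosh 3^8 := by
        nlinarith [mul_nonneg (sub_nonneg.mpr hc2) (pow_nonneg hcp.le 6)]
      have hp4 : (0:ℝ) ≤ Real.cosh 3^4 := pow_nonneg hcp.le 4
      have hp6 : (0:ℝ) ≤ Real.cosh 3^6 := pow_nonneg hcp.le 6
      linarith
  · refine DS_main 120 (-252) 168 (-35) 0 _ ?_ ?_
    · intro x hx
      have hc : Real.cosh (x/2) = (Real.exp (x/2) + (Real.exp (x/2))⁻¹)/2 := by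
        rw [Real.cosh_eq, Real.exp_neg]
      have hs : Real.sinh (x/2) = (Real.exp (x/2) - (Real.exp (x/2))⁻¹)/2 := by
        rw [Real.sinh_eq, Real.exp_neg]
      have he2 : Real.exp x = Real.exp (x/2)^2 := by
        rw [sq, ← Real.exp_add]; ring_nf
      have hcx : Real.cosh x = (Real.exp (x/2)^2 + (Real.exp (x/2)^2)⁻¹)/2 := by
        rw [Real.cosh_eq, Real.exp_neg, he2]
      have hsx : Real.sinh x = (Real.exp (x/2)^2 - (Real.exp (x/2)^2)⁻¹)/2 := by
        rw [Real.sinh_eq, Real.exp_neg, he2]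
      have h1 : Real.exp (x/2) ≠ 0 := (Real.exp_pos _).ne'
      unfold DSg DSg1 DSg2
      rw [hc, hs, hcx, hsx]
      push_cast
      field_simp
      ring
    · refine ⟨6, by norm_num, ?_⟩
      have hexp3 : (20:ℝ) ≤ Real.exp 3 := by
        have h3 : Real.exp 3 = Real.exp 1 ^ 3 := by
          rw [show (3:ℝ) = ((3:ℕ):ℝ) * 1 by norm_num, Real.exp_nat_mul]
        have hgt : (2.718:ℝ) ≤ Real.exp 1 := by linarith [Real.exp_one_gt_d9]
        have hp : (2.718:ℝ)^3 ≤ Real.exp 1^3 := by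
          apply pow_le_pow_left₀ (by norm_num) hgt
        have h20 : (20:ℝ) ≤ (2.718:ℝ)^3 := by norm_num
        rw [h3]; linarith
      have hc10 : (10:ℝ) ≤ Real.cosh 3 := by
        rw [Real.cosh_eq]
        have := Real.exp_pos (-3:ℝ)
        linarith
      have hcp : (0:ℝ) < Real.cosh 3 := by linarith
      unfold DSg
      rw [show (6:ℝ)/2 = 3 by norm_num]
      apply div_ne_zero _ (pow_ne_zero 11 hcp.ne')
      apply ne_of_lt
      have hc2 : (100:ℝ) ≤ Real.cosh 3^2 := by nlinarith [hc10]
      have h42 : 100 * Real.cosh 3^2 ≤ Real.cosh 3^4 := by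
        nlinarith [mul_nonneg (sub_nonneg.mpr hc2) (sq_nonneg (Real.cosh 3))]
      have h64 : 100 * Real.cosh 3^4 ≤ Real.cosh 3^6 := by
        nlinarith [mul_nonneg (sub_nonneg.mpr hc2) (pow_nonneg hcp.le 4)]
      have h86 : 100 * Real.cosh 3^6 ≤ Real.cosh 3^8 := by
        nlinarith [mul_nonneg (sub_nonneg.mpr hc2) (pow_nonneg hcp.le 6)]
      have hp4 : (0:ℝ) ≤ Real.cosh 3^4 := pow_nonneg hcp.le 4
      have hp6 : (0:ℝ) ≤ Real.cosh 3^6 := pow_nonneg hcp.le 6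
      linarith
  · refine DS_main 210 (-504) 420 (-140) 15 _ ?_ ?_
    · intro x hx
      have hc : Real.cosh (x/2) = (Real.exp (x/2) + (Real.exp (x/2))⁻¹)/2 := by
        rw [Real.cosh_eq, Real.exp_neg]
      have hs : Real.sinh (x/2) = (Real.exp (x/2) - (Real.exp (x/2))⁻¹)/2 := by
        rw [Real.sinh_eq, Real.exp_neg]
      have he2 : Real.exp x = Real.exp (x/2)^2 := by
        rw [sq, ← Real.exp_add]; ring_nf
      have hcx : Real.cosh x = (Real.exp (x/2)^2 + (Real.exp (x/2)^2)⁻¹)/2 := by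
        rw [Real.cosh_eq, Real.exp_neg, he2]
      have hsx : Real.sinh x = (Real.exp (x/2)^2 - (Real.exp (x/2)^2)⁻¹)/2 := by
        rw [Real.sinh_eq, Real.exp_neg, he2]
      have h1 : Real.exp (x/2) ≠ 0 := (Real.exp_pos _).ne'
      unfold DSg DSg1 DSg2
      rw [hc, hs, hcx, hsx]
      push_cast
      field_simp
      ring
    · refine ⟨6, by norm_num, ?_⟩
      have hexp3 : (20:ℝ) ≤ Real.exp 3 := by
        have h3 : Real.exp 3 = Real.exp 1 ^ 3 := by
          rw [show (3:ℝ) = ((3:ℕ):ℝ) * 1 by norm_num, Real.exp_nat_mul]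
        have hgt : (2.718:ℝ) ≤ Real.exp 1 := by linarith [Real.exp_one_gt_d9]
        have hp : (2.718:ℝ)^3 ≤ Real.exp 1^3 := by
          apply pow_le_pow_left₀ (by norm_num) hgt
        have h20 : (20:ℝ) ≤ (2.718:ℝ)^3 := by norm_num
        rw [h3]; linarith
      have hc10 : (10:ℝ) ≤ Real.cosh 3 := by
        rw [Real.cosh_eq]
        have := Real.exp_pos (-3:ℝ)
        linarith
      have hcp : (0:ℝ) < Real.cosh 3 := by linarith
      unfold DSg
      rw [show (6:ℝ)/2 = 3 by norm_num]
      apply div_ne_zero _ (pow_ne_zero 11 hcp.ne')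
      apply ne_of_gt
      have hc2 : (100:ℝ) ≤ Real.cosh 3^2 := by nlinarith [hc10]
      have h42 : 100 * Real.cosh 3^2 ≤ Real.cosh 3^4 := by
        nlinarith [mul_nonneg (sub_nonneg.mpr hc2) (sq_nonneg (Real.cosh 3))]
      have h64 : 100 * Real.cosh 3^4 ≤ Real.cosh 3^6 := by
        nlinarith [mul_nonneg (sub_nonneg.mpr hc2) (pow_nonneg hcp.le 4)]
      have h86 : 100 * Real.cosh 3^6 ≤ Real.cosh 3^8 := by
        nlinarith [mul_nonneg (sub_nonneg.mpr hc2) (pow_nonneg hcp.le 6)]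
      have hp4 : (0:ℝ) ≤ Real.cosh 3^4 := pow_nonneg hcp.le 4
      have hp6 : (0:ℝ) ≤ Real.cosh 3^6 := pow_nonneg hcp.le 6
      linarith
end
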